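/- Let 1 ≤ p < ∞ and w ∈ 𝒲. If (y_n)_{n≥1} is a semi-normalized block basic sequence of the canonical basis of g(w,p), then lim_{m→∞} ‖∑_{n=1}^m y_n‖_{g(w,p)} = ∞. -/

import Mathlib

open Filter Function Set
open scoped ENNReal NNReal Topology

noncomputable section

/-- The Garling norm of a real sequence, with values in `ℝ≥0∞`:
`‖f‖_{g(w,p)} = sup_φ (∑ n, |f (φ n)|^p · w n)^{1/p}`, the supremum being taken over all
strictly increasing maps `φ : ℕ → ℕ`. -/
def garNorm (w : ℕ → ℝ) (p : ℝ) (f : ℕ → ℝ) : ℝ≥0∞ :=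
  ⨆ φ : {φ : ℕ → ℕ // StrictMono φ},
    (∑' n, ENNReal.ofReal (|f (φ.1 n)| ^ p * w n)) ^ (1 / p)

/-- `w ∈ 𝒲`: a normalized, nonincreasing, positive weight tending to zero and non-summable.
(Sequences are indexed from `0`, so `w 0` is the paper's `w₁`.) -/
structure IsGarlingWeight (w : ℕ → ℝ) : Prop where
  pos : ∀ n, 0 < w n
  first : w 0 = 1
  antitone : ∀ n, w (n + 1) ≤ w n
  tendsto_zero : Tendsto w atTop (𝓝 0)
  not_summable : ¬ Summable w

lemma exists_enum (I : Finset ℕ) :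
    ∃ Φ : ℕ → ℕ, StrictMono Φ ∧ (∀ k, k < I.card → Φ k ∈ I) ∧
      (∀ x ∈ I, ∃ k, ∃ _h : k < I.card, Φ k = x) := by
  classical
  let e : Fin I.card ≃o {x // x ∈ I} := I.orderIsoOfFin rfl
  refine ⟨fun k => if h : k < I.card then (e ⟨k, h⟩ : ℕ) else I.sup id + 1 + k, ?_, ?_, ?_⟩
  · intro k k' hkk'
    by_cases h1 : k < I.card
    · by_cases h2 : k' < I.card
      · simp only [dif_pos h1, dif_pos h2]
        exact_mod_cast e.strictMono (show (⟨k, h1⟩ : Fin I.card) < ⟨k', h2⟩ from hkk')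
      · simp only [dif_pos h1, dif_neg h2]
        have : (e ⟨k, h1⟩ : ℕ) ≤ I.sup id := Finset.le_sup (f := id) (e ⟨k, h1⟩).2
        omega
    · have h2 : ¬ k' < I.card := by omega
      simp only [dif_neg h1, dif_neg h2]
      omega
  · intro k h
    simp only [dif_pos h]
    exact (e ⟨k, h⟩).2
  · intro x hx
    refine ⟨(e.symm ⟨x, hx⟩ : Fin I.card), (e.symm ⟨x, hx⟩).isLt, ?_⟩
    simp only [dif_pos (e.symm ⟨x, hx⟩).isLt]
    rw [show (⟨(e.symm ⟨x, hx⟩ : Fin I.card), (e.symm ⟨x, hx⟩).isLt⟩ : Fin I.card)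
        = e.symm ⟨x, hx⟩ from Fin.eta _ _]
    simp

lemma garNorm_ge_range (w : ℕ → ℝ) (p : ℝ) (hp : 0 < p) (f : ℕ → ℝ)
    (Φ : ℕ → ℕ) (hΦ : StrictMono Φ) (N : ℕ) :
    (∑ k ∈ Finset.range N, ENNReal.ofReal (|f (Φ k)| ^ p * w k)) ^ (1/p) ≤ garNorm w p f := by
  refine le_trans ?_ (le_iSup (fun φ : {φ : ℕ → ℕ // StrictMono φ} =>
    (∑' n, ENNReal.ofReal (|f (φ.1 n)| ^ p * w n)) ^ (1 / p)) ⟨Φ, hΦ⟩)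
  exact ENNReal.rpow_le_rpow (ENNReal.sum_le_tsum _) (by positivity)

lemma garNorm_ge_sel (w : ℕ → ℝ) (hA : ∀ i j : ℕ, i ≤ j → w j ≤ w i)
    (p : ℝ) (hp : 0 < p) (f : ℕ → ℝ) (I : Finset ℕ) (ρ : ℕ → ℕ)
    (hρ : StrictMonoOn ρ ↑I) :
    (∑ x ∈ I, ENNReal.ofReal (|f x| ^ p * w (ρ x))) ^ (1/p) ≤ garNorm w p f := by
  obtain ⟨Φ, hΦ, hmem, hsurj⟩ := exists_enum I
  have hle : ∀ k, k < I.card → k ≤ ρ (Φ k) := by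
    intro k
    induction k with
    | zero => omega
    | succ k ih =>
      intro h
      have h' : k < I.card := by omega
      have h1 : ρ (Φ k) < ρ (Φ (k+1)) :=
        hρ (hmem k h') (hmem (k+1) h) (hΦ (Nat.lt_succ_self k))
      have := ih h'
      omega
  have key : ∑ x ∈ I, ENNReal.ofReal (|f x| ^ p * w (ρ x))
      ≤ ∑ k ∈ Finset.range I.card, ENNReal.ofReal (|f (Φ k)| ^ p * w k) := by
    have hbij : ∑ k ∈ Finset.range I.card, ENNReal.ofReal (|f (Φ k)| ^ p * w (ρ (Φ k)))
        = ∑ x ∈ I, ENNReal.ofReal (|f x| ^ p * w (ρ x)) := by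
      refine Finset.sum_bij (fun k _ => Φ k) ?_ ?_ ?_ ?_
      · intro k hk; exact hmem k (Finset.mem_range.mp hk)
      · intro k1 h1 k2 h2 h; exact hΦ.injective h
      · intro x hx
        obtain ⟨k, hk, hkx⟩ := hsurj x hx
        exact ⟨k, Finset.mem_range.mpr hk, hkx⟩
      · intro k hk; rfl
    rw [← hbij]
    refine Finset.sum_le_sum fun k hk => ?_
    refine ENNReal.ofReal_le_ofReal ?_
    refine mul_le_mul_of_nonneg_left ?_ (Real.rpow_nonneg (abs_nonneg _) p)
    exact hA k (ρ (Φ k)) (hle k (Finset.mem_range.mp hk))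
  exact le_trans (ENNReal.rpow_le_rpow key (by positivity)) (garNorm_ge_range w p hp f Φ hΦ I.card)

lemma garNorm_mono (w : ℕ → ℝ) (hw : ∀ n, 0 ≤ w n) (p : ℝ) (hp : 0 ≤ p) (f g : ℕ → ℝ)
    (h : ∀ i, |f i| ≤ |g i|) : garNorm w p f ≤ garNorm w p g := by
  refine iSup_mono fun φ => ?_
  refine ENNReal.rpow_le_rpow ?_ (by positivity)
  refine ENNReal.tsum_le_tsum fun n => ?_
  refine ENNReal.ofReal_le_ofReal ?_
  exact mul_le_mul_of_nonneg_right (Real.rpow_le_rpow (abs_nonneg _) (h _) hp) (hw _)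

/-- **Statement 8.** If `(y_n)` is a semi-normalized block basic sequence of the canonical
basis of `g(w,p)`, then `‖∑_{n=1}^m y_n‖_{g(w,p)} → ∞` as `m → ∞`. -/
theorem garling_block_partial_sums_unbounded (p : ℝ) (hp : 1 ≤ p)
    (w : ℕ → ℝ) (hw : IsGarlingWeight w)
    (P : ℕ → ℕ) (hP0 : P 0 = 0) (hP : StrictMono P)
    (a : ℕ → ℝ) (y : ℕ → ℕ → ℝ)
    (hy : ∀ n i, y n i = if P n ≤ i ∧ i < P (n + 1) then a i else 0)
    (hynz : ∀ n, y n ≠ 0)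
    (c C : ℝ) (hc : 0 < c)
    (hlb : ∀ n, ENNReal.ofReal c ≤ garNorm w p (y n))
    (hub : ∀ n, garNorm w p (y n) ≤ ENNReal.ofReal C) :
    Tendsto (fun m => garNorm w p (fun i => ∑ n ∈ Finset.range m, y n i)) atTop (𝓝 ∞) := by
  classical
  have hp0 : 0 < p := lt_of_lt_of_le one_pos hp
  have hwa : ∀ i j : ℕ, i ≤ j → w j ≤ w i := by
    intro i j hij
    exact antitone_nat_of_succ_le hw.antitone hij
  have hw0 : ∀ n, 0 ≤ w n := fun n => (hw.pos n).le
  -- partial sums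
  have hS : ∀ m i, (∑ n ∈ Finset.range m, y n i) = if i < P m then a i else 0 := by
    intro m
    induction m with
    | zero => intro i; simp [hP0]
    | succ m ih =>
      intro i
      rw [Finset.sum_range_succ, ih i, hy m i]
      have hPm : P m < P (m+1) := hP (Nat.lt_succ_self m)
      by_cases h1 : i < P m
      · rw [if_pos h1, if_neg (by omega), if_pos (by omega)]
        ring
      · rw [if_neg h1]
        by_cases h2 : i < P (m+1)
        · rw [if_pos ⟨by omega, h2⟩, if_pos h2]; ring
        · rw [if_neg (by omega), if_neg h2]; ring
  have hmono : Monotone (fun m => garNorm w p (fun i => ∑ n ∈ Finset.range m, y n i)) := by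
    intro m m' hmm'
    refine garNorm_mono w hw0 p hp0.le _ _ fun i => ?_
    rw [hS m i, hS m' i]
    by_cases h1 : i < P m
    · rw [if_pos h1, if_pos (lt_of_lt_of_le h1 (hP.monotone hmm'))]
    · rw [if_neg h1]; simp [abs_nonneg]
  have htend := tendsto_atTop_iSup hmono
  set T := ⨆ m, garNorm w p (fun i => ∑ n ∈ Finset.range m, y n i) with hTdef
  rcases eq_or_ne T ⊤ with htop | htop
  · rw [htop] at htend; exact htend
  exfalso
  have hbound : ∀ m, garNorm w p (fun i => ∑ n ∈ Finset.range m, y n i) ≤ T :=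
    fun m => le_iSup (fun m => garNorm w p (fun i => ∑ n ∈ Finset.range m, y n i)) m
  set W : ℕ → ℝ := fun L => ∑ j ∈ Finset.range L, w j with hWdef
  have hWnn : ∀ L, 0 ≤ W L := fun L => Finset.sum_nonneg fun j _ => hw0 j
  have hWtend : Tendsto W atTop atTop :=
    (not_summable_iff_tendsto_nat_atTop_of_nonneg hw0).mp hw.not_summable
  have hTpne : T ^ p ≠ ⊤ :=
    (ENNReal.rpow_lt_top_of_nonneg hp0.le htop).ne
  -- generic bound transfer
  have hbase : ∀ (I : Finset ℕ) (ρ : ℕ → ℕ), StrictMonoOn ρ ↑I →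
      (∑ x ∈ I, ENNReal.ofReal (|a x| ^ p * w (ρ x))) ≤ T ^ p := by
    intro I ρ hρ
    set m := I.sup id + 1 with hm
    have key := garNorm_ge_sel w hwa p hp0
      (fun i => ∑ n ∈ Finset.range m, y n i) I ρ hρ
    have heq : (∑ x ∈ I, ENNReal.ofReal (|∑ n ∈ Finset.range m, y n x| ^ p * w (ρ x)))
        = ∑ x ∈ I, ENNReal.ofReal (|a x| ^ p * w (ρ x)) := by
      refine Finset.sum_congr rfl fun x hx => ?_
      have hxm : x < P m := by
        have h1 : x ≤ I.sup id := Finset.le_sup (f := id) hx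
        have h2 : m ≤ P m := hP.le_apply
        omega
      rw [hS m x, if_pos hxm]
    rw [heq] at key
    have key2 := ENNReal.rpow_le_rpow (key.trans (hbound m)) hp0.le
    rwa [← ENNReal.rpow_mul, one_div_mul_cancel hp0.ne', ENNReal.rpow_one] at key2
  -- Step 1 : finiteness of large entries
  have hfin : ∀ s : ℝ, 0 < s → {i : ℕ | s ≤ |a i|}.Finite := by
    intro s hs
    by_contra hinf
    have hinf' : {i : ℕ | s ≤ |a i|}.Infinite := hinf
    obtain ⟨k, hk⟩ :=
      (hWtend.eventually (eventually_gt_atTop ((T ^ p).toReal / s ^ p))).exists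
    obtain ⟨I, hIsub, hIcard⟩ := hinf'.exists_subset_card_eq k
    obtain ⟨Φ, hΦ, hmem, _⟩ := exists_enum I
    set m := I.sup id + 1 with hm
    have key := garNorm_ge_range w p hp0 (fun i => ∑ n ∈ Finset.range m, y n i) Φ hΦ I.card
    have hterm : ∀ j ∈ Finset.range I.card,
        ENNReal.ofReal (s ^ p * w j)
          ≤ ENNReal.ofReal (|∑ n ∈ Finset.range m, y n (Φ j)| ^ p * w j) := by
      intro j hj
      have hjm := hmem j (Finset.mem_range.mp hj)
      have hxm : Φ j < P m := by
        have h1 : Φ j ≤ I.sup id := Finset.le_sup (f := id) hjm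
        have h2 : m ≤ P m := hP.le_apply
        omega
      rw [hS m (Φ j), if_pos hxm]
      have hsa : s ≤ |a (Φ j)| := hIsub hjm
      refine ENNReal.ofReal_le_ofReal ?_
      refine mul_le_mul_of_nonneg_right ?_ (hw0 j)
      exact Real.rpow_le_rpow hs.le hsa hp0.le
    have hge : ENNReal.ofReal (s ^ p * W k)
        ≤ (garNorm w p (fun i => ∑ n ∈ Finset.range m, y n i)) ^ p := by
      have h1 : ENNReal.ofReal (s ^ p * W k)
          = ∑ j ∈ Finset.range I.card, ENNReal.ofReal (s ^ p * w j) := by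
        rw [hIcard, hWdef]
        rw [← ENNReal.ofReal_sum_of_nonneg
          (fun j _ => mul_nonneg (Real.rpow_nonneg hs.le p) (hw0 j))]
        rw [← Finset.mul_sum]
      rw [h1]
      have h2 := Finset.sum_le_sum hterm
      have h3 := ENNReal.rpow_le_rpow key hp0.le
      rw [← ENNReal.rpow_mul, one_div_mul_cancel hp0.ne', ENNReal.rpow_one] at h3
      exact h2.trans h3
    have hfin2 : ENNReal.ofReal (s ^ p * W k) ≤ T ^ p := by
      refine hge.trans ?_
      exact ENNReal.rpow_le_rpow (hbound m) hp0.le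
    rw [ENNReal.ofReal_le_iff_le_toReal hTpne] at hfin2
    have hsp : 0 < s ^ p := Real.rpow_pos_of_pos hs p
    rw [div_lt_iff₀ hsp] at hk
    nlinarith [hk, hfin2]
  -- Step 2 : small entries eventually
  have hsmall : ∀ s : ℝ, 0 < s → ∃ n₀ : ℕ, ∀ n, n₀ ≤ n → ∀ i, P n ≤ i → |a i| < s := by
    intro s hs
    set F := (hfin s hs).toFinset with hF
    refine ⟨F.sup id + 1, fun n hn i hi => ?_⟩
    by_contra hcon
    push_neg at hcon
    have hiF : i ∈ F := (hfin s hs).mem_toFinset.mpr hcon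
    have h1 : i ≤ F.sup id := Finset.le_sup (f := id) hiF
    have h2 : n ≤ P n := hP.le_apply
    omega
  -- Step 3 : block selections
  have hsel : ∀ n : ℕ, ∃ φ : ℕ → ℕ, StrictMono φ ∧
      ENNReal.ofReal ((c/2) ^ p) ≤
        ∑ k ∈ (Finset.range (P (n+1))).filter (fun k => P n ≤ φ k ∧ φ k < P (n+1)),
          ENNReal.ofReal (|a (φ k)| ^ p * w k) := by
    intro n
    have h1 : ENNReal.ofReal (c/2) < garNorm w p (y n) :=
      lt_of_lt_of_le ((ENNReal.ofReal_lt_ofReal_iff hc).mpr (by linarith)) (hlb n)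
    rw [garNorm, lt_iSup_iff] at h1
    obtain ⟨⟨φ, hφ⟩, hφ2⟩ := h1
    refine ⟨φ, hφ, ?_⟩
    have htsum : (∑' k, ENNReal.ofReal (|y n (φ k)| ^ p * w k))
        = ∑ k ∈ (Finset.range (P (n+1))).filter (fun k => P n ≤ φ k ∧ φ k < P (n+1)),
            ENNReal.ofReal (|y n (φ k)| ^ p * w k) := by
      apply tsum_eq_sum
      intro k hk
      have hzero : y n (φ k) = 0 := by
        rw [hy]
        rw [if_neg]
        intro hcond
        exact hk (Finset.mem_filter.mpr
          ⟨Finset.mem_range.mpr (lt_of_le_of_lt hφ.le_apply hcond.2), hcond⟩)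
      rw [hzero]
      simp [Real.zero_rpow hp0.ne']
    have heq : ∀ k ∈ (Finset.range (P (n+1))).filter (fun k => P n ≤ φ k ∧ φ k < P (n+1)),
        ENNReal.ofReal (|y n (φ k)| ^ p * w k) = ENNReal.ofReal (|a (φ k)| ^ p * w k) := by
      intro k hk
      rw [hy, if_pos (Finset.mem_filter.mp hk).2]
    have h3 := ENNReal.rpow_le_rpow hφ2.le hp0.le
    rw [← ENNReal.rpow_mul, one_div_mul_cancel hp0.ne', ENNReal.rpow_one,
      ENNReal.ofReal_rpow_of_pos (by linarith), htsum] at h3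
    rwa [Finset.sum_congr rfl heq] at h3
  -- Step 4 : the recursive construction
  set δ : ℝ := (c/2) ^ p / 2 with hδdef
  have hcp : 0 < (c/2) ^ p := Real.rpow_pos_of_pos (by linarith) p
  have hδpos : 0 < δ := by rw [hδdef]; linarith
  have main : ∀ r : ℕ, ∃ (L : ℕ) (I : Finset ℕ) (ρ : ℕ → ℕ), StrictMonoOn ρ ↑I ∧
      (∀ x ∈ I, x < L ∧ ρ x < L) ∧
      ENNReal.ofReal (r * δ) ≤ ∑ x ∈ I, ENNReal.ofReal (|a x| ^ p * w (ρ x)) := by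
    intro r
    induction r with
    | zero =>
      refine ⟨0, ∅, id, ?_, by simp, by simp⟩
      intro x hx; simp at hx
    | succ r ih =>
      obtain ⟨L, I, ρ, hρ, hbd, hsum⟩ := ih
      set s : ℝ := (δ / (W L + 1)) ^ (1/p) with hs
      have hWL1 : 0 < W L + 1 := by have := hWnn L; linarith
      have hspos : 0 < s := Real.rpow_pos_of_pos (by positivity) _
      have hsp : s ^ p * W L ≤ δ := by
        have hspeq : s ^ p = δ / (W L + 1) := by
          rw [hs, ← Real.rpow_mul (by positivity), one_div_mul_cancel hp0.ne',
            Real.rpow_one]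
        rw [hspeq, div_mul_eq_mul_div, div_le_iff₀ hWL1]
        nlinarith [hWnn L]
      obtain ⟨n₀, hn₀⟩ := hsmall s hspos
      set n := max n₀ L with hn
      obtain ⟨φ, hφ, hφsum⟩ := hsel n
      set K := (Finset.range (P (n+1))).filter (fun k => P n ≤ φ k ∧ φ k < P (n+1)) with hK
      set Ktail := K.filter (fun k => ¬ k < L) with hKt
      have hLn : L ≤ n := le_max_right _ _
      have hLPn : L ≤ P n := le_trans hLn hP.le_apply
      have hPnn1 : P n < P (n+1) := hP (Nat.lt_succ_self n)
      -- head bound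
      have hhead : ∑ k ∈ K.filter (fun k => k < L), ENNReal.ofReal (|a (φ k)| ^ p * w k)
          ≤ ENNReal.ofReal δ := by
        have t1 : ∑ k ∈ K.filter (fun k => k < L), ENNReal.ofReal (|a (φ k)| ^ p * w k)
            ≤ ∑ k ∈ K.filter (fun k => k < L), ENNReal.ofReal (s ^ p * w k) := by
          refine Finset.sum_le_sum fun k hk => ?_
          have hkK := Finset.mem_filter.mp hk
          have hcond := (Finset.mem_filter.mp hkK.1).2
          have hsmall2 : |a (φ k)| < s := hn₀ n (le_max_left _ _) (φ k) hcond.1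
          refine ENNReal.ofReal_le_ofReal ?_
          refine mul_le_mul_of_nonneg_right ?_ (hw0 k)
          exact Real.rpow_le_rpow (abs_nonneg _) hsmall2.le hp0.le
        have t2 : ∑ k ∈ K.filter (fun k => k < L), ENNReal.ofReal (s ^ p * w k)
            ≤ ∑ k ∈ Finset.range L, ENNReal.ofReal (s ^ p * w k) := by
          refine Finset.sum_le_sum_of_subset fun k hk => ?_
          exact Finset.mem_range.mpr (Finset.mem_filter.mp hk).2
        have t3 : ∑ k ∈ Finset.range L, ENNReal.ofReal (s ^ p * w k)
            = ENNReal.ofReal (s ^ p * W L) := by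
          rw [← ENNReal.ofReal_sum_of_nonneg
            (fun j _ => mul_nonneg (Real.rpow_nonneg hspos.le p) (hw0 j)), ← Finset.mul_sum]
        calc ∑ k ∈ K.filter (fun k => k < L), ENNReal.ofReal (|a (φ k)| ^ p * w k)
            ≤ ∑ k ∈ Finset.range L, ENNReal.ofReal (s ^ p * w k) := t1.trans t2
          _ = ENNReal.ofReal (s ^ p * W L) := t3
          _ ≤ ENNReal.ofReal δ := ENNReal.ofReal_le_ofReal hsp
      -- tail bound
      have htail : ENNReal.ofReal δ ≤ ∑ k ∈ Ktail, ENNReal.ofReal (|a (φ k)| ^ p * w k) := by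
        have hsplit := Finset.sum_filter_add_sum_filter_not K (fun k => k < L)
          (fun k => ENNReal.ofReal (|a (φ k)| ^ p * w k))
        have h1 : ENNReal.ofReal δ + ENNReal.ofReal δ
            ≤ ENNReal.ofReal δ + ∑ k ∈ Ktail, ENNReal.ofReal (|a (φ k)| ^ p * w k) := by
          have h2 : ENNReal.ofReal ((c/2) ^ p) = ENNReal.ofReal δ + ENNReal.ofReal δ := by
            rw [← ENNReal.ofReal_add hδpos.le hδpos.le]
            congr 1
            rw [hδdef]; ring
          rw [← h2]
          rw [← hsplit] at hφsum
          exact hφsum.trans (add_le_add_left hhead _)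
        exact (ENNReal.add_le_add_iff_left ENNReal.ofReal_ne_top).mp h1
      -- new data
      have himgmem : ∀ x ∈ Ktail.image φ, ∃ k ∈ Ktail, φ k = x := by
        intro x hx
        obtain ⟨k, hk, hkx⟩ := Finset.mem_image.mp hx
        exact ⟨k, hk, hkx⟩
      have hKtailfacts : ∀ k ∈ Ktail, L ≤ k ∧ k < P (n+1) ∧ P n ≤ φ k ∧ φ k < P (n+1) := by
        intro k hk
        have h1 := Finset.mem_filter.mp hk
        have h2 := Finset.mem_filter.mp h1.1
        exact ⟨by omega, Finset.mem_range.mp h2.1, h2.2⟩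
      set ρ' : ℕ → ℕ := fun x => if x < L then ρ x else Function.invFun φ x with hρ'
      have hinv : ∀ k, Function.invFun φ (φ k) = k :=
        fun k => Function.leftInverse_invFun hφ.injective k
      have hρ'new : ∀ k ∈ Ktail, ρ' (φ k) = k := by
        intro k hk
        obtain ⟨hkL, _, hfk, _⟩ := hKtailfacts k hk
        have hnlt : ¬ φ k < L := by omega
        simp only [hρ']
        rw [if_neg hnlt]
        exact hinv k
      have hρ'old : ∀ x ∈ I, ρ' x = ρ x := by
        intro x hx
        simp only [hρ']
        rw [if_pos (hbd x hx).1]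
      have hdisj : Disjoint I (Ktail.image φ) := by
        rw [Finset.disjoint_left]
        intro x hxI hximg
        obtain ⟨k, hk, hkx⟩ := himgmem x hximg
        obtain ⟨_, _, hfk, _⟩ := hKtailfacts k hk
        have := (hbd x hxI).1
        omega
      refine ⟨P (n+1), I ∪ Ktail.image φ, ρ', ?_, ?_, ?_⟩
      · -- StrictMonoOn
        intro x hx x' hx' hxx'
        simp only [Finset.coe_union, Set.mem_union, Finset.mem_coe] at hx hx'
        rcases hx with hx | hx
        · rcases hx' with hx' | hx'
          · rw [hρ'old x hx, hρ'old x' hx']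
            exact hρ hx hx' hxx'
          · obtain ⟨k, hk, hkx⟩ := himgmem x' hx'
            obtain ⟨hkL, _, hfk, _⟩ := hKtailfacts k hk
            rw [hρ'old x hx, ← hkx, hρ'new k hk]
            have := (hbd x hx).2
            omega
        · rcases hx' with hx' | hx'
          · obtain ⟨k, hk, hkx⟩ := himgmem x hx
            obtain ⟨_, _, hfk, _⟩ := hKtailfacts k hk
            have := (hbd x' hx').1
            omega
          · obtain ⟨k, hk, hkx⟩ := himgmem x hx
            obtain ⟨k', hk', hkx'⟩ := himgmem x' hx'
            rw [← hkx, ← hkx', hρ'new k hk, hρ'new k' hk']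
            have : φ k < φ k' := by omega
            exact hφ.lt_iff_lt.mp this
      · -- bounds
        intro x hx
        rcases Finset.mem_union.mp hx with hx | hx
        · obtain ⟨h1, h2⟩ := hbd x hx
          rw [hρ'old x hx]
          omega
        · obtain ⟨k, hk, hkx⟩ := himgmem x hx
          obtain ⟨hkL, hkP, hfk, hfk2⟩ := hKtailfacts k hk
          rw [← hkx, hρ'new k hk]
          omega
      · -- the sum
        rw [Finset.sum_union hdisj]
        have e1 : ∑ x ∈ I, ENNReal.ofReal (|a x| ^ p * w (ρ' x))
            = ∑ x ∈ I, ENNReal.ofReal (|a x| ^ p * w (ρ x)) :=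
          Finset.sum_congr rfl fun x hx => by rw [hρ'old x hx]
        have e2 : ∑ x ∈ Ktail.image φ, ENNReal.ofReal (|a x| ^ p * w (ρ' x))
            = ∑ k ∈ Ktail, ENNReal.ofReal (|a (φ k)| ^ p * w k) := by
          rw [Finset.sum_image (fun x _ y _ h => hφ.injective h)]
          exact Finset.sum_congr rfl fun k hk => by rw [hρ'new k hk]
        rw [e1, e2]
        have : ENNReal.ofReal (↑(r+1) * δ) = ENNReal.ofReal (↑r * δ) + ENNReal.ofReal δ := by
          rw [← ENNReal.ofReal_add (by positivity) hδpos.le]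
          congr 1
          push_cast
          ring
        rw [this]
        exact add_le_add hsum htail
  -- conclude
  obtain ⟨rr, hrr⟩ := exists_nat_gt ((T ^ p).toReal / δ)
  obtain ⟨L, I, ρ, hρ, hbd, hsum⟩ := main rr
  have hfinal : ENNReal.ofReal (rr * δ) ≤ T ^ p := hsum.trans (hbase I ρ hρ)
  rw [ENNReal.ofReal_le_iff_le_toReal hTpne] at hfinal
  rw [div_lt_iff₀ hδpos] at hrr
  linarith

end
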